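/- With f^μ_ν(x) = (x−|ν|)!(x−|μ|+1) / ((x−|ν|−ℓ(ν)+ℓ(μ)+1)! ∏ᵢ(γᵢ−βᵢ)!) as above, for partitions μ = (1^{β₁}2^{β₂}...) ⪯ λ = (1^{α₁}2^{α₂}...) and integer k ≥ 0: Σ_{ν: μ⪯ν⪯λ} (−1)^{ℓ(ν)+ℓ(λ)} · f^μ_ν(k+|λ|) · (ℓ(λ)−ℓ(ν)+|λ|−|ν|)! / ( (|λ|−|ν|)! ∏ᵢ (αᵢ−γᵢ)! ) = k! / ( (k−ℓ(λ)+ℓ(μ))! ∏ᵢ (αᵢ−βᵢ)! ), where ν = (1^{γ₁}2^{γ₂}...) and the convention 1/x! = 0 for x < 0 is used. -/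

import Mathlib

/-- `invFact z` is `1/z!` with the convention that `1/z! = 0` for `z < 0`. -/
noncomputable def invFact (z : ℤ) : ℂ :=
  if z < 0 then 0 else ((Nat.factorial z.toNat : ℂ))⁻¹

lemma invFact_natCast (n : ℕ) : invFact n = ((Nat.factorial n : ℂ))⁻¹ := by
  simp [invFact]

lemma invFact_eq_succ_mul (w : ℤ) : invFact w = ((w : ℂ) + 1) * invFact (w + 1) := by
  rcases lt_or_ge w 0 with h | h
  · rcases eq_or_lt_of_le (by omega : w ≤ -1) with h1 | h1
    · subst h1; norm_num [invFact]
    · rw [invFact, invFact, if_pos h, if_pos (by omega), mul_zero]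
  · obtain ⟨n, rfl⟩ := Int.eq_ofNat_of_zero_le h
    rw [show ((n : ℤ) + 1) = ((n + 1 : ℕ) : ℤ) by push_cast; ring]
    rw [invFact_natCast, invFact_natCast, Nat.factorial_succ]
    have h1 : ((Nat.factorial n : ℂ)) ≠ 0 := by exact_mod_cast Nat.factorial_ne_zero n
    have h2 : ((n : ℂ) + 1) ≠ 0 := Nat.cast_add_one_ne_zero n
    push_cast
    field_simp

noncomputable def Gf (m k u d : ℕ) : ℂ :=
  (Nat.factorial (k + u) : ℂ) * (Nat.factorial (m + u - d) : ℂ) *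
    invFact ((k : ℤ) + u - d + 1) / (Nat.factorial u : ℂ)

lemma lemI (m k u d : ℕ) (hd : d ≤ m + u) :
    Gf (m+1) k u (d+1) - Gf (m+1) k u d = ((k : ℂ) - m) * Gf m k u d := by
  unfold Gf
  rw [show m + 1 + u - (d + 1) = m + u - d from by omega,
      show m + 1 + u - d = (m + u - d) + 1 from by omega, Nat.factorial_succ]
  push_cast
  rw [show (k:ℤ) + u - ((d:ℤ)+1) + 1 = ((k:ℤ) + u - d + 1) - 1 + 1 - 1 from by ring]
  rw [show ((k:ℤ) + u - d + 1) - 1 + 1 = (k:ℤ) + u - d + 1 from by ring]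
  rw [invFact_eq_succ_mul (((k:ℤ) + u - d + 1) - 1)]
  rw [show ((k:ℤ) + u - d + 1) - 1 + 1 = (k:ℤ) + u - d + 1 from by ring]
  rw [Nat.cast_sub hd]
  push_cast
  ring

lemma lemB (m k v d : ℕ) (hd : d ≤ m + v) :
    Gf (m+1) k (v+1) (d+1) = Gf (m+1) k v d + (k : ℂ) * Gf m (k-1) (v+1) d := by
  have hv : ((Nat.factorial v : ℂ)) ≠ 0 := by exact_mod_cast Nat.factorial_ne_zero v
  have hv1 : ((v : ℂ) + 1) ≠ 0 := Nat.cast_add_one_ne_zero v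
  rcases Nat.eq_zero_or_pos k with hk | hk
  · subst hk
    unfold Gf
    rw [show m + 1 + (v+1) - (d+1) = m + 1 + v - d from by omega]
    rw [show (0:ℕ) + (v+1) = (0 + v) + 1 from by omega, Nat.factorial_succ,
        Nat.factorial_succ v]
    push_cast
    rw [show (0:ℤ) + ((v:ℤ)+1) - ((d:ℤ)+1) + 1 = (0:ℤ) + v - d + 1 from by ring]
    field_simp
    ring
  · obtain ⟨k', rfl⟩ : ∃ k', k = k' + 1 := ⟨k - 1, by omega⟩
    unfold Gf
    rw [show m + 1 + (v+1) - (d+1) = (m + 1 + v - d) from by omega,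
        show k' + 1 - 1 = k' from by omega,
        show m + (v+1) - d = (m + v - d) + 1 from by omega,
        show m + 1 + v - d = (m + v - d) + 1 from by omega,
        show k' + 1 + (v + 1) = (k' + 1 + v) + 1 from by omega,
        show k' + (v + 1) = k' + 1 + v from by omega,
        Nat.factorial_succ (k' + 1 + v), Nat.factorial_succ v]
    push_cast
    rw [show (k':ℤ)+1 + ((v:ℤ)+1) - ((d:ℤ)+1) + 1 = ((k':ℤ)+1) + v - d + 1 from by ring,
        show (k':ℤ) + ((v:ℤ)+1) - d + 1 = ((k':ℤ)+1) + v - d + 1 from by ring]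
    field_simp
    ring

lemma lemNabla (i u m k d : ℕ) (hiu : i ≤ u) (hd : d ≤ m) :
    Gf (m+1) k (u-i) (d+1) - Gf (m+1) k u d
      = ((k : ℂ) - m) * (∑ t ∈ Finset.range (i+1), Gf m k (u-t) d)
        - (k : ℂ) * (∑ t ∈ Finset.range i, Gf m (k-1) (u-t) d) := by
  induction i with
  | zero =>
      simp only [Nat.sub_zero, zero_add, Finset.sum_range_one, Finset.range_zero,
        Finset.sum_empty, mul_zero, sub_zero]
      exact lemI m k u d (by omega)
  | succ i ih =>
      have this := ih (by omega)
      have hB := lemB m k (u - (i+1)) d (by omega)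
      rw [show u - (i+1) + 1 = u - i from by omega] at hB
      have hI := lemI m k (u - (i+1)) d (by omega)
      rw [Finset.sum_range_succ, Finset.sum_range_succ (fun t => Gf m (k-1) (u-t) d) i]
      linear_combination this + hI - hB

lemma mapSumSwap {α : Type*} (S : Multiset α) (n : ℕ) (g : ℕ → α → ℂ) :
    (S.map (fun ρ => ∑ t ∈ Finset.range n, g t ρ)).sum
      = ∑ t ∈ Finset.range n, (S.map (g t)).sum := by
  induction S using Multiset.induction_on with
  | empty => simp
  | cons a s ih => simp [ih, Finset.sum_add_distrib]

lemma tele (k T i : ℕ) (h : i ≤ T) :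
    ∑ t ∈ Finset.range (i+1), (1:ℂ)/((k:ℂ)+T+1-t)
      - ∑ t ∈ Finset.range i, (1:ℂ)/((k:ℂ)+T-t) = 1/((k:ℂ)+T+1) := by
  rw [Finset.sum_range_succ' (fun t => (1:ℂ)/((k:ℂ)+T+1-t)) i]
  have : ∀ t ∈ Finset.range i, (1:ℂ)/((k:ℂ)+T+1-((t:ℕ)+1:ℕ)) = (1:ℂ)/((k:ℂ)+T-t) := by
    intro t _
    push_cast
    ring_nf
  rw [Finset.sum_congr rfl this]
  push_cast
  ring

lemma denom_ne_zero (k T t : ℕ) (h : t ≤ T) : ((k:ℂ)+T+1-t) ≠ 0 := by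
  have : ((k:ℂ)+T+1-t) = ((k + (T - t) + 1 : ℕ) : ℂ) := by
    push_cast [Nat.cast_sub h]
    ring
  rw [this]
  exact Nat.cast_ne_zero.mpr (by omega)

lemma mainLemma (c : Multiset ℕ) : ∀ (k T : ℕ), c.sum ≤ T →
    (c.powerset.map (fun ρ => (-1:ℂ)^(Multiset.card ρ)
        * Gf (Multiset.card c) k (T - ρ.sum) (Multiset.card ρ))).sum
      = (-1:ℂ)^(Multiset.card c)
          * (∏ t ∈ Finset.range (Multiset.card c), ((k:ℂ) - t)) / ((k:ℂ) + T + 1) := by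
  induction c using Multiset.induction_on with
  | empty =>
      intro k T hT
      rw [Multiset.powerset_zero]
      simp only [Multiset.card_zero, Multiset.map_singleton, Multiset.sum_singleton,
        Multiset.card_zero, Multiset.sum_zero, Nat.sub_zero, pow_zero, Finset.range_zero,
        Finset.prod_empty, one_mul, mul_one]
      unfold Gf
      rw [show (0:ℕ) + T - 0 = T from by omega,
          show (k:ℤ) + T - ((0:ℕ):ℤ) + 1 = ((k+T+1 : ℕ) : ℤ) from by push_cast; ring]
      rw [invFact_natCast, Nat.factorial_succ]
      have h1 : ((Nat.factorial (k+T) : ℂ)) ≠ 0 := by exact_mod_cast Nat.factorial_ne_zero _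
      have h2 : ((Nat.factorial T : ℂ)) ≠ 0 := by exact_mod_cast Nat.factorial_ne_zero _
      have h3 : ((k:ℂ)+T+1) ≠ 0 := by
        have := denom_ne_zero k T 0 (Nat.zero_le _)
        simpa using this
      push_cast
      field_simp
  | cons i c ih =>
      intro k T hT
      rw [Multiset.sum_cons] at hT
      have hcT : c.sum ≤ T := by omega
      set m := Multiset.card c with hm
      rw [Multiset.powerset_cons, Multiset.map_add, Multiset.sum_add, Multiset.map_map]
      have key : ∀ ρ ∈ c.powerset,
          ((fun ρ => (-1:ℂ)^(Multiset.card ρ)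
              * Gf (Multiset.card (i ::ₘ c)) k (T - ρ.sum) (Multiset.card ρ)) ∘ (Multiset.cons i)) ρ
          = -((-1:ℂ)^(Multiset.card ρ)
              * Gf (Multiset.card (i ::ₘ c)) k ((T - ρ.sum) - i) (Multiset.card ρ + 1)) := by
        intro ρ hρ
        have hρc : ρ ≤ c := by rwa [Multiset.mem_powerset] at hρ
        obtain ⟨e, he⟩ := Multiset.le_iff_exists_add.mp hρc
        have hρs : ρ.sum ≤ c.sum := by rw [he, Multiset.sum_add]; omega
        simp only [Function.comp_apply, Multiset.card_cons, Multiset.sum_cons]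
        rw [show T - (i + ρ.sum) = (T - ρ.sum) - i from by omega, pow_succ]
        ring
      rw [Multiset.map_congr rfl key]
      -- now combine the two sums
      have comb : (c.powerset.map (fun ρ => (-1:ℂ)^(Multiset.card ρ)
              * Gf (Multiset.card (i ::ₘ c)) k (T - ρ.sum) (Multiset.card ρ))).sum
          + (c.powerset.map (fun ρ => -((-1:ℂ)^(Multiset.card ρ)
              * Gf (Multiset.card (i ::ₘ c)) k ((T - ρ.sum) - i) (Multiset.card ρ + 1)))).sum
          = (c.powerset.map (fun ρ =>
              (∑ t ∈ Finset.range (i+1), (-((k:ℂ) - m)) * ((-1:ℂ)^(Multiset.card ρ)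
                  * Gf m k ((T - ρ.sum) - t) (Multiset.card ρ)))
              + (∑ t ∈ Finset.range i, (k:ℂ) * ((-1:ℂ)^(Multiset.card ρ)
                  * Gf m (k-1) ((T - ρ.sum) - t) (Multiset.card ρ))))).sum := by
        rw [← Multiset.sum_map_add]
        apply congrArg Multiset.sum
        apply Multiset.map_congr rfl
        intro ρ hρ
        have hρc : ρ ≤ c := by rwa [Multiset.mem_powerset] at hρ
        obtain ⟨e, he⟩ := Multiset.le_iff_exists_add.mp hρc
        have hρs : ρ.sum ≤ c.sum := by rw [he, Multiset.sum_add]; omega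
        have hρd : Multiset.card ρ ≤ m := Multiset.card_le_card hρc
        have hnab := lemNabla i (T - ρ.sum) m k (Multiset.card ρ) (by omega) hρd
        have hcards : Multiset.card (i ::ₘ c) = m + 1 := by rw [Multiset.card_cons]
        rw [hcards]
        have e1 : ∑ t ∈ Finset.range (i+1), (-((k:ℂ) - m)) * ((-1:ℂ)^(Multiset.card ρ)
              * Gf m k ((T - ρ.sum) - t) (Multiset.card ρ))
            = (-((k:ℂ) - m)) * (-1:ℂ)^(Multiset.card ρ)
              * ∑ t ∈ Finset.range (i+1), Gf m k ((T - ρ.sum) - t) (Multiset.card ρ) := by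
          rw [Finset.mul_sum]
          exact Finset.sum_congr rfl (fun t _ => by ring)
        have e2 : ∑ t ∈ Finset.range i, (k:ℂ) * ((-1:ℂ)^(Multiset.card ρ)
              * Gf m (k-1) ((T - ρ.sum) - t) (Multiset.card ρ))
            = (k:ℂ) * (-1:ℂ)^(Multiset.card ρ)
              * ∑ t ∈ Finset.range i, Gf m (k-1) ((T - ρ.sum) - t) (Multiset.card ρ) := by
          rw [Finset.mul_sum]
          exact Finset.sum_congr rfl (fun t _ => by ring)
        rw [e1, e2]
        linear_combination (-(-1:ℂ)^(Multiset.card ρ)) * hnab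
      rw [comb, Multiset.sum_map_add]
      rw [mapSumSwap c.powerset (i+1) (fun t ρ => (-((k:ℂ) - m)) * ((-1:ℂ)^(Multiset.card ρ)
            * Gf m k ((T - ρ.sum) - t) (Multiset.card ρ)))]
      rw [mapSumSwap c.powerset i (fun t ρ => (k:ℂ) * ((-1:ℂ)^(Multiset.card ρ)
            * Gf m (k-1) ((T - ρ.sum) - t) (Multiset.card ρ)))]
      have hQ1 : ((k:ℂ) - m) * (∏ j ∈ Finset.range m, ((k:ℂ) - j))
          = ∏ j ∈ Finset.range (m+1), ((k:ℂ) - j) := by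
        rw [Finset.prod_range_succ]; ring
      have hQ2 : (k:ℂ) * (∏ j ∈ Finset.range m, (((k-1:ℕ):ℂ) - j))
          = ∏ j ∈ Finset.range (m+1), ((k:ℂ) - j) := by
        rcases Nat.eq_zero_or_pos k with hk | hk
        · subst hk
          rw [Finset.prod_eq_zero (Finset.mem_range.mpr (Nat.succ_pos m))
            (by simp : ((0:ℕ):ℂ) - ((0:ℕ):ℂ) = 0)]
          simp
        · obtain ⟨k', rfl⟩ : ∃ k', k = k' + 1 := ⟨k - 1, by omega⟩
          rw [show k' + 1 - 1 = k' from rfl]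
          rw [Finset.prod_range_succ' (fun j => ((k'+1:ℕ):ℂ) - (j:ℂ)) m]
          rw [Finset.prod_congr rfl (fun j (_ : j ∈ Finset.range m) =>
            (by push_cast; ring : ((k'+1:ℕ):ℂ) - ((j+1:ℕ):ℂ) = ((k':ℕ):ℂ) - (j:ℂ)))]
          push_cast
          ring
      have ev1 : ∀ t ∈ Finset.range (i+1),
          (c.powerset.map (fun ρ => (-((k:ℂ) - m)) * ((-1:ℂ)^(Multiset.card ρ)
            * Gf m k ((T - ρ.sum) - t) (Multiset.card ρ)))).sum
          = ((-1:ℂ)^(m+1) * (∏ j ∈ Finset.range (m+1), ((k:ℂ) - j)))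
              * (1 / ((k:ℂ) + T + 1 - t)) := by
        intro t ht
        have ht' : t ≤ i := by simpa [Nat.lt_succ_iff] using Finset.mem_range.mp ht
        have hmc : ∀ ρ ∈ c.powerset, (-((k:ℂ) - m)) * ((-1:ℂ)^(Multiset.card ρ)
              * Gf m k ((T - ρ.sum) - t) (Multiset.card ρ))
            = (-((k:ℂ) - m)) * ((-1:ℂ)^(Multiset.card ρ)
              * Gf m k ((T - t) - ρ.sum) (Multiset.card ρ)) := by
          intro ρ hρ
          have hρc : ρ ≤ c := by rwa [Multiset.mem_powerset] at hρ
          obtain ⟨e, he⟩ := Multiset.le_iff_exists_add.mp hρc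
          have hρs : ρ.sum ≤ c.sum := by rw [he, Multiset.sum_add]; omega
          rw [show T - ρ.sum - t = T - t - ρ.sum from by omega]
        rw [congrArg Multiset.sum (Multiset.map_congr rfl hmc)]
        rw [Multiset.sum_map_mul_left, ih k (T - t) (by omega)]
        have hden : ((k:ℂ) + ((T - t : ℕ):ℂ) + 1) = ((k:ℂ) + T + 1 - t) := by
          rw [Nat.cast_sub (by omega : t ≤ T)]; ring
        rw [hden]
        rw [← hQ1]
        have hne : ((k:ℂ) + T + 1 - t) ≠ 0 := denom_ne_zero k T t (by omega)
        field_simp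
        ring
      have ev2 : ∀ t ∈ Finset.range i,
          (c.powerset.map (fun ρ => (k:ℂ) * ((-1:ℂ)^(Multiset.card ρ)
            * Gf m (k-1) ((T - ρ.sum) - t) (Multiset.card ρ)))).sum
          = -(((-1:ℂ)^(m+1) * (∏ j ∈ Finset.range (m+1), ((k:ℂ) - j)))
              * (1 / ((k:ℂ) + T - t))) := by
        intro t ht
        have ht' : t < i := Finset.mem_range.mp ht
        have hmc : ∀ ρ ∈ c.powerset, (k:ℂ) * ((-1:ℂ)^(Multiset.card ρ)
              * Gf m (k-1) ((T - ρ.sum) - t) (Multiset.card ρ))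
            = (k:ℂ) * ((-1:ℂ)^(Multiset.card ρ)
              * Gf m (k-1) ((T - t) - ρ.sum) (Multiset.card ρ)) := by
          intro ρ hρ
          have hρc : ρ ≤ c := by rwa [Multiset.mem_powerset] at hρ
          obtain ⟨e, he⟩ := Multiset.le_iff_exists_add.mp hρc
          have hρs : ρ.sum ≤ c.sum := by rw [he, Multiset.sum_add]; omega
          rw [show T - ρ.sum - t = T - t - ρ.sum from by omega]
        rw [congrArg Multiset.sum (Multiset.map_congr rfl hmc)]
        rw [Multiset.sum_map_mul_left, ih (k-1) (T - t) (by omega)]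
        have hne : ((k:ℂ) + T - t) ≠ 0 := by
          have h1 : ((k:ℂ) + T - t) = ((k:ℂ) + (T-1:ℕ) + 1 - t) := by
            rw [Nat.cast_sub (by omega : 1 ≤ T)]; ring
          rw [h1]
          exact denom_ne_zero k (T-1) t (by omega)
        rcases Nat.eq_zero_or_pos k with hk | hk
        · subst hk
          have hQ0 : (∏ j ∈ Finset.range (m+1), (((0:ℕ):ℂ) - j)) = 0 :=
            Finset.prod_eq_zero (Finset.mem_range.mpr (Nat.succ_pos m))
              (by simp)
          rw [hQ0]
          simp
        · have hden : (((k-1:ℕ):ℂ) + ((T - t : ℕ):ℂ) + 1) = ((k:ℂ) + T - t) := by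
            rw [Nat.cast_sub (by omega : t ≤ T), Nat.cast_sub (by omega : 1 ≤ k)]
            push_cast; ring
          rw [hden, ← hQ2]
          field_simp
          ring
      rw [Finset.sum_congr rfl ev1, Finset.sum_congr rfl ev2]
      rw [← Finset.mul_sum, Finset.sum_neg_distrib, ← Finset.mul_sum]
      have htele := tele k T i (by omega)
      rw [Multiset.card_cons]
      have hfin : ((-1:ℂ)^(m+1) * (∏ j ∈ Finset.range (m+1), ((k:ℂ) - j)))
          * (∑ t ∈ Finset.range (i+1), 1 / ((k:ℂ) + T + 1 - t))
          + -(((-1:ℂ)^(m+1) * (∏ j ∈ Finset.range (m+1), ((k:ℂ) - j)))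
              * (∑ t ∈ Finset.range i, 1 / ((k:ℂ) + T - t)))
          = (-1:ℂ)^(m+1) * (∏ j ∈ Finset.range (m+1), ((k:ℂ) - j)) / ((k:ℂ) + T + 1) := by
        have expand : ∀ t ∈ Finset.range i, (1:ℂ) / ((k:ℂ) + T - t) = 1 / ((k:ℂ)+T-t) := fun _ _ => rfl
        linear_combination ((-1:ℂ)^(m+1) * (∏ j ∈ Finset.range (m+1), ((k:ℂ) - j))) * htele
      exact hfin

lemma fallFact (k : ℕ) : ∀ m : ℕ, (Nat.factorial k : ℂ) * invFact ((k:ℤ) - m)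
    = ∏ t ∈ Finset.range m, ((k:ℂ) - t) := by
  intro m
  induction m with
  | zero =>
      rw [show (k:ℤ) - (0:ℕ) = ((k:ℕ):ℤ) from by push_cast; ring, invFact_natCast]
      have : ((Nat.factorial k : ℂ)) ≠ 0 := by exact_mod_cast Nat.factorial_ne_zero k
      simp [this]
  | succ m ihm =>
      rw [Finset.prod_range_succ, ← ihm]
      rw [invFact_eq_succ_mul ((k:ℤ) - (m+1 : ℕ))]
      rw [show (k:ℤ) - (m+1 : ℕ) + 1 = (k:ℤ) - m from by push_cast; ring]
      push_cast
      ring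

lemma count_powerset {α : Type*} [DecidableEq α] (c : Multiset α) : ∀ (ρ : Multiset α)
    (S : Finset α), c.toFinset ⊆ S → ρ.toFinset ⊆ S →
    Multiset.count ρ c.powerset = ∏ i ∈ S, Nat.choose (c.count i) (ρ.count i) := by
  induction c using Multiset.induction_on with
  | empty =>
      intro ρ S _ hρ
      rcases eq_or_ne ρ 0 with rfl | hne
      · simp [Multiset.powerset_zero]
      · obtain ⟨a, ha⟩ := Multiset.exists_mem_of_ne_zero hne
        have haS : a ∈ S := hρ (Multiset.mem_toFinset.mpr ha)
        rw [Multiset.powerset_zero, Multiset.count_singleton, if_neg hne]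
        symm
        apply Finset.prod_eq_zero haS
        rw [Multiset.count_zero]
        exact Nat.choose_eq_zero_of_lt (Multiset.count_pos.mpr ha)
  | cons a c ihc =>
      intro ρ S hc hρ
      have haS : a ∈ S := hc (by simp [Multiset.mem_toFinset])
      have hcS : c.toFinset ⊆ S := by
        intro x hx
        exact hc (by simp [Multiset.mem_toFinset] at hx ⊢; exact Or.inr hx)
      have hsplit : ∏ i ∈ S, Nat.choose ((a ::ₘ c).count i) (ρ.count i)
          = Nat.choose (c.count a + 1) (ρ.count a)
            * ∏ i ∈ S.erase a, Nat.choose (c.count i) (ρ.count i) := by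
        rw [← Finset.mul_prod_erase S _ haS, Multiset.count_cons_self]
        congr 1
        exact Finset.prod_congr rfl (fun i hi => by
          rw [Multiset.count_cons_of_ne (Finset.ne_of_mem_erase hi)])
      rw [Multiset.powerset_cons, Multiset.count_add, hsplit]
      by_cases hmem : a ∈ ρ
      · -- ρ contains a
        have hpos := Multiset.count_pos.mpr hmem
        have hρa : ρ.count a = (ρ.erase a).count a + 1 := by
          rw [Multiset.count_erase_self]; omega
        have herase : (Multiset.map (Multiset.cons a) c.powerset).count ρ
            = c.powerset.count (ρ.erase a) := by
          conv_lhs => rw [← Multiset.cons_erase hmem]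
          exact Multiset.count_map_eq_count' _ _
            (fun x y h => (Multiset.cons_inj_right a).mp h) _
        have h1 : Multiset.count ρ c.powerset
            = Nat.choose (c.count a) ((ρ.erase a).count a + 1)
              * ∏ i ∈ S.erase a, Nat.choose (c.count i) (ρ.count i) := by
          rw [ihc ρ S hcS hρ, ← Finset.mul_prod_erase S _ haS, hρa]
        have h2 : Multiset.count (ρ.erase a) c.powerset
            = Nat.choose (c.count a) ((ρ.erase a).count a)
              * ∏ i ∈ S.erase a, Nat.choose (c.count i) (ρ.count i) := by
          rw [ihc (ρ.erase a) S hcS (fun x hx => hρ (by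
            rw [Multiset.mem_toFinset] at hx ⊢
            exact Multiset.mem_of_mem_erase hx))]
          rw [← Finset.mul_prod_erase S _ haS]
          congr 1
          exact Finset.prod_congr rfl (fun i hi => by
            rw [Multiset.count_erase_of_ne (fun h => (Finset.ne_of_mem_erase hi) h)])
        rw [herase, hρa, Nat.choose_succ_succ, add_mul, h1, h2]
        ring
      · -- a ∉ ρ
        have hρa : ρ.count a = 0 := Multiset.count_eq_zero.mpr hmem
        have herase : (Multiset.map (Multiset.cons a) c.powerset).count ρ = 0 := by
          rw [Multiset.count_eq_zero]
          intro hmm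
          obtain ⟨x, _, rfl⟩ := Multiset.mem_map.mp hmm
          exact hmem (Multiset.mem_cons_self a x)
        rw [herase, hρa, Nat.choose_zero_right, one_mul, add_zero]
        rw [ihc ρ S hcS hρ, ← Finset.mul_prod_erase S _ haS, hρa, Nat.choose_zero_right, one_mul]

/-- `f^μ_ν(x) = (x−|ν|)! (x−|μ|+1) / ((x−|ν|−ℓ(ν)+ℓ(μ)+1)! ∏ᵢ (γᵢ−βᵢ)!)`, with the
convention `1/x! = 0` for `x < 0`; here `μ, ν` are partitions given as multisets of
parts, with multiplicities `βᵢ = μ.count i`, `γᵢ = ν.count i`. -/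
noncomputable def fmn (μ ν : Multiset ℕ) (x : ℕ) : ℂ :=
  (Nat.factorial (x - ν.sum) : ℂ) * ((x : ℂ) - (μ.sum : ℂ) + 1) *
    invFact ((x : ℤ) - (ν.sum : ℤ) - (ν.card : ℤ) + (μ.card : ℤ) + 1) *
    ∏ i ∈ (μ.toFinset ∪ ν.toFinset), invFact ((ν.count i : ℤ) - (μ.count i : ℤ))

set_option maxHeartbeats 1000000 in
open scoped Classical in
/-- For partitions `μ ⪯ λ` and `k ≥ 0`:
`Σ_{μ⪯ν⪯λ} (−1)^{ℓ(ν)+ℓ(λ)} f^μ_ν(k+|λ|) (ℓ(λ)−ℓ(ν)+|λ|−|ν|)! / ((|λ|−|ν|)! ∏ᵢ(αᵢ−γᵢ)!)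
= k! / ((k−ℓ(λ)+ℓ(μ))! ∏ᵢ(αᵢ−βᵢ)!)`, with the convention `1/x! = 0` for `x < 0`. -/
theorem stmt12 (k : ℕ) (lam μ : Multiset ℕ) (h0 : (0 : ℕ) ∉ lam) (hμ : μ ≤ lam) :
    ∑ ν ∈ lam.powerset.toFinset,
      (if μ ≤ ν then
        (-1 : ℂ) ^ (ν.card + lam.card) * fmn μ ν (k + lam.sum) *
          (Nat.factorial (lam.card - ν.card + (lam.sum - ν.sum)) : ℂ) /
          ((Nat.factorial (lam.sum - ν.sum) : ℂ) *
            ∏ i ∈ lam.toFinset, (Nat.factorial (lam.count i - ν.count i) : ℂ))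
      else 0) =
    (Nat.factorial k : ℂ) * invFact ((k : ℤ) - (lam.card : ℤ) + (μ.card : ℤ)) /
      ∏ i ∈ lam.toFinset, (Nat.factorial (lam.count i - μ.count i) : ℂ) := by
  set c : Multiset ℕ := lam - μ with hc
  have hlam : lam = μ + c := by
    rw [hc, add_comm]
    exact (tsub_add_cancel_of_le hμ).symm
  set m : ℕ := Multiset.card c with hm
  clear_value m c
  -- Step 1: restrict to ν with μ ≤ ν and reindex by ρ = ν - μ
  rw [← Finset.sum_filter]
  have hbij : ∑ ν ∈ (lam.powerset.toFinset.filter (fun ν => μ ≤ ν)),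
        ((-1 : ℂ) ^ (Multiset.card ν + Multiset.card lam) * fmn μ ν (k + lam.sum) *
          (Nat.factorial (Multiset.card lam - Multiset.card ν + (lam.sum - ν.sum)) : ℂ) /
          ((Nat.factorial (lam.sum - ν.sum) : ℂ) *
            ∏ i ∈ lam.toFinset, (Nat.factorial (lam.count i - ν.count i) : ℂ)))
      = ∑ ρ ∈ c.powerset.toFinset,
        ((-1 : ℂ) ^ (Multiset.card (μ+ρ) + Multiset.card lam) * fmn μ (μ+ρ) (k + lam.sum) *
          (Nat.factorial (Multiset.card lam - Multiset.card (μ+ρ) + (lam.sum - (μ+ρ).sum)) : ℂ) /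
          ((Nat.factorial (lam.sum - (μ+ρ).sum) : ℂ) *
            ∏ i ∈ lam.toFinset, (Nat.factorial (lam.count i - (μ+ρ).count i) : ℂ))) := by
    apply Finset.sum_nbij' (fun ν => ν - μ) (fun ρ => μ + ρ)
    · intro ν hν
      simp only [Finset.mem_filter, Multiset.mem_toFinset, Multiset.mem_powerset] at hν
      simp only [Multiset.mem_toFinset, Multiset.mem_powerset]
      rw [hc]
      exact tsub_le_tsub_right hν.1 μ
    · intro ρ hρ
      simp only [Multiset.mem_toFinset, Multiset.mem_powerset] at hρ
      simp only [Finset.mem_filter, Multiset.mem_toFinset, Multiset.mem_powerset]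
      constructor
      · rw [hlam]; exact add_le_add (le_refl μ) hρ
      · exact Multiset.le_add_right μ ρ
    · intro ν hν
      simp only [Finset.mem_filter, Multiset.mem_toFinset, Multiset.mem_powerset] at hν
      exact add_tsub_cancel_of_le hν.2
    · intro ρ hρ
      exact add_tsub_cancel_left μ ρ
    · intro ν hν
      simp only [Finset.mem_filter, Multiset.mem_toFinset, Multiset.mem_powerset] at hν
      rw [add_tsub_cancel_of_le hν.2]
  rw [hbij]
  have hcl : c ≤ lam := by rw [hc]; exact tsub_le_self
  have hsum : lam.sum = μ.sum + c.sum := by rw [hlam, Multiset.sum_add]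
  have hcard : Multiset.card lam = Multiset.card μ + m := by rw [hlam, Multiset.card_add, hm]
  have hcnt : ∀ i, lam.count i = μ.count i + c.count i := fun i => by
    rw [hlam, Multiset.count_add]
  have hprodc_ne : (∏ i ∈ lam.toFinset, ((Nat.factorial (c.count i)) : ℂ)) ≠ 0 :=
    Finset.prod_ne_zero_iff.mpr (fun i _ => by exact_mod_cast Nat.factorial_ne_zero _)
  have hterm : ∀ ρ ∈ c.powerset.toFinset,
      ((-1 : ℂ) ^ (Multiset.card (μ+ρ) + Multiset.card lam) * fmn μ (μ+ρ) (k + lam.sum) *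
          (Nat.factorial (Multiset.card lam - Multiset.card (μ+ρ) + (lam.sum - (μ+ρ).sum)) : ℂ) /
          ((Nat.factorial (lam.sum - (μ+ρ).sum) : ℂ) *
            ∏ i ∈ lam.toFinset, (Nat.factorial (lam.count i - (μ+ρ).count i) : ℂ)))
      = ((Multiset.count ρ c.powerset : ℂ)
          * ((-1:ℂ)^(Multiset.card ρ) * Gf m k (c.sum - ρ.sum) (Multiset.card ρ)))
        * (((k:ℂ) + c.sum + 1) * (-1:ℂ)^m
            / ∏ i ∈ lam.toFinset, ((Nat.factorial (c.count i)) : ℂ)) := by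
    intro ρ hρmem
    have hρc : ρ ≤ c := by
      rwa [Multiset.mem_toFinset, Multiset.mem_powerset] at hρmem
    have hd : Multiset.card ρ ≤ m := hm ▸ Multiset.card_le_card hρc
    obtain ⟨e, he⟩ := Multiset.le_iff_exists_add.mp hρc
    have hρs : ρ.sum ≤ c.sum := by rw [he, Multiset.sum_add]; omega
    have hcle : ∀ i, ρ.count i ≤ c.count i := fun i => Multiset.count_le_of_le i hρc
    have hρfl : ρ.toFinset ⊆ lam.toFinset :=
      Multiset.toFinset_subset.mpr (Multiset.subset_of_le (le_trans hρc hcl))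
    -- sign
    have esign : ((-1 : ℂ)) ^ (Multiset.card (μ+ρ) + Multiset.card lam)
        = (-1:ℂ)^(Multiset.card ρ) * (-1:ℂ)^m := by
      have h2 : Multiset.card (μ+ρ) + Multiset.card lam
          = 2 * Multiset.card μ + (Multiset.card ρ + m) := by
        rw [Multiset.card_add, hcard]; ring
      rw [h2, pow_add, pow_mul, pow_add]
      norm_num
    -- pieces of fmn
    have eF1 : Multiset.card lam - Multiset.card (μ+ρ) + (lam.sum - (μ+ρ).sum)
        = m + (c.sum - ρ.sum) - Multiset.card ρ := by
      rw [Multiset.card_add, Multiset.sum_add, hcard, hsum]; omega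
    have eF2 : lam.sum - (μ+ρ).sum = c.sum - ρ.sum := by
      rw [Multiset.sum_add, hsum]; omega
    have eF3 : k + lam.sum - (μ+ρ).sum = k + (c.sum - ρ.sum) := by
      rw [Multiset.sum_add, hsum]; omega
    have eF4 : ((k + lam.sum : ℕ) : ℂ) - (μ.sum : ℂ) + 1 = (k:ℂ) + c.sum + 1 := by
      rw [hsum]; push_cast; ring
    have eF5 : ((k + lam.sum : ℕ) : ℤ) - ((μ+ρ).sum : ℤ) - (Multiset.card (μ+ρ) : ℤ)
          + (Multiset.card μ : ℤ) + 1
        = (k : ℤ) + ((c.sum - ρ.sum : ℕ) : ℤ) - (Multiset.card ρ : ℤ) + 1 := by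
      rw [Multiset.card_add, Multiset.sum_add, hsum, Nat.cast_sub hρs]
      push_cast; ring
    have eP1 : ∀ i ∈ lam.toFinset, (Nat.factorial (lam.count i - (μ+ρ).count i) : ℂ)
        = (Nat.factorial (c.count i - ρ.count i) : ℂ) := by
      intro i _
      rw [show lam.count i - (μ+ρ).count i = c.count i - ρ.count i from by
        rw [Multiset.count_add, hcnt i]; omega]
    -- the invFact product in fmn
    have eP2 : ∏ i ∈ (μ.toFinset ∪ (μ+ρ).toFinset),
          invFact (((μ+ρ).count i : ℤ) - (μ.count i : ℤ))
        = ∏ i ∈ lam.toFinset, ((Nat.factorial (ρ.count i) : ℂ))⁻¹ := by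
      have e1 : ∀ i ∈ (μ.toFinset ∪ (μ+ρ).toFinset),
          invFact (((μ+ρ).count i : ℤ) - (μ.count i : ℤ))
            = ((Nat.factorial (ρ.count i) : ℂ))⁻¹ := by
        intro i _
        rw [show ((μ+ρ).count i : ℤ) - (μ.count i : ℤ) = ((ρ.count i : ℕ) : ℤ) from by
          rw [Multiset.count_add]; push_cast; ring]
        exact invFact_natCast _
      rw [Finset.prod_congr rfl e1]
      have hsub1 : ρ.toFinset ⊆ μ.toFinset ∪ (μ+ρ).toFinset := by
        intro x hx
        exact Finset.mem_union_right _ (Multiset.toFinset_subset.mpr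
          (Multiset.subset_of_le (Multiset.le_add_left ρ μ)) hx)
      rw [← Finset.prod_subset hsub1 (fun x _ hx => by
        rw [Multiset.count_eq_zero_of_notMem (fun hmm => hx (Multiset.mem_toFinset.mpr hmm))]
        simp)]
      rw [Finset.prod_subset hρfl (fun x _ hx => by
        rw [Multiset.count_eq_zero_of_notMem (fun hmm => hx (Multiset.mem_toFinset.mpr hmm))]
        simp)]
    -- counting identity
    have hcount : Multiset.count ρ c.powerset
        = ∏ i ∈ lam.toFinset, Nat.choose (c.count i) (ρ.count i) :=
      count_powerset c ρ lam.toFinset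
        (Multiset.toFinset_subset.mpr (Multiset.subset_of_le hcl)) hρfl
    have hprodN : ∏ i ∈ lam.toFinset, Nat.factorial (c.count i)
        = Multiset.count ρ c.powerset
          * ((∏ i ∈ lam.toFinset, Nat.factorial (ρ.count i))
            * ∏ i ∈ lam.toFinset, Nat.factorial (c.count i - ρ.count i)) := by
      rw [hcount, ← Finset.prod_mul_distrib, ← Finset.prod_mul_distrib]
      exact Finset.prod_congr rfl (fun i _ => by
        rw [← Nat.choose_mul_factorial_mul_factorial (hcle i), mul_assoc])
    have hprodC : (∏ i ∈ lam.toFinset, ((Nat.factorial (c.count i)) : ℂ))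
        = (Multiset.count ρ c.powerset : ℂ)
          * ((∏ i ∈ lam.toFinset, ((Nat.factorial (ρ.count i)) : ℂ))
            * ∏ i ∈ lam.toFinset, ((Nat.factorial (c.count i - ρ.count i)) : ℂ)) := by
      exact_mod_cast congrArg (Nat.cast (R := ℂ)) hprodN
    have hn0 : (Multiset.count ρ c.powerset : ℂ) ≠ 0 := by
      have : ρ ∈ c.powerset := Multiset.mem_powerset.mpr hρc
      exact_mod_cast Multiset.count_ne_zero.mpr this
    -- now unfold and compute
    unfold fmn Gf
    rw [esign, eF1, eF2, eF3, eF4, eF5, Finset.prod_congr rfl eP1, eP2,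
      Finset.prod_inv_distrib]
    have h1ne : (∏ i ∈ lam.toFinset, ((Nat.factorial (ρ.count i)) : ℂ)) ≠ 0 :=
      Finset.prod_ne_zero_iff.mpr (fun i _ => by exact_mod_cast Nat.factorial_ne_zero _)
    have h2ne : (∏ i ∈ lam.toFinset, ((Nat.factorial (c.count i - ρ.count i)) : ℂ)) ≠ 0 :=
      Finset.prod_ne_zero_iff.mpr (fun i _ => by exact_mod_cast Nat.factorial_ne_zero _)
    have h3ne : ((Nat.factorial (c.sum - ρ.sum) : ℂ)) ≠ 0 := by
      exact_mod_cast Nat.factorial_ne_zero _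
    rw [hprodC]
    rw [show m + (c.sum - ρ.sum) - Multiset.card ρ = m + (c.sum - ρ.sum) - Multiset.card ρ from rfl]
    field_simp
  rw [Finset.sum_congr rfl hterm]
  -- pull out the constant and convert to a multiset sum
  rw [← Finset.sum_mul]
  have hms : ∑ ρ ∈ c.powerset.toFinset, ((Multiset.count ρ c.powerset : ℂ)
        * ((-1:ℂ)^(Multiset.card ρ) * Gf m k (c.sum - ρ.sum) (Multiset.card ρ)))
      = (c.powerset.map (fun ρ => (-1:ℂ)^(Multiset.card ρ)
          * Gf m k (c.sum - ρ.sum) (Multiset.card ρ))).sum := by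
    rw [Finset.sum_multiset_map_count]
    exact Finset.sum_congr rfl (fun ρ _ => by rw [nsmul_eq_mul])
  have hmain := mainLemma c k c.sum le_rfl
  rw [← hm] at hmain
  rw [hms, hmain]
  -- final algebra
  have hne : ((k:ℂ) + c.sum + 1) ≠ 0 := by
    have := denom_ne_zero k c.sum 0 (Nat.zero_le _)
    simpa using this
  have hm1 : ((-1:ℂ))^m * (-1:ℂ)^m = 1 := by
    rw [← pow_add]
    exact Even.neg_one_pow ⟨m, by ring⟩
  have hRHSarg : (k : ℤ) - (Multiset.card lam : ℤ) + (Multiset.card μ : ℤ) = (k:ℤ) - m := by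
    rw [hcard]; push_cast; ring
  have hRHScnt : ∀ i ∈ lam.toFinset, (Nat.factorial (lam.count i - μ.count i) : ℂ)
      = (Nat.factorial (c.count i) : ℂ) := by
    intro i _
    rw [show lam.count i - μ.count i = c.count i from by rw [hcnt i]; omega]
  rw [hRHSarg, Finset.prod_congr rfl hRHScnt, fallFact k m]
  have hstep : ((-1:ℂ)^m * (∏ t ∈ Finset.range m, ((k:ℂ) - t))) / ((k:ℂ) + c.sum + 1)
        * (((k:ℂ) + c.sum + 1) * (-1:ℂ)^m
            / ∏ i ∈ lam.toFinset, ((Nat.factorial (c.count i)) : ℂ))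
      = ((-1:ℂ)^m * (-1:ℂ)^m) * (((k:ℂ) + c.sum + 1) / ((k:ℂ) + c.sum + 1))
        * ((∏ t ∈ Finset.range m, ((k:ℂ) - t))
            / ∏ i ∈ lam.toFinset, ((Nat.factorial (c.count i)) : ℂ)) := by
    ring
  rw [hstep, hm1, div_self hne]
  ring
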